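/- For symmetric positive definite matrices X, Y, the determinant of the midpoint satisfies det((X+Y)/2) ≥ √(det X · det Y), with equality if and only if X = Y. -/

import Mathlib

open Matrix

noncomputable def matLog {n : ℕ} (A : Matrix (Fin n) (Fin n) ℝ) : Matrix (Fin n) (Fin n) ℝ :=
  open scoped Classical in
  if hA : A.IsHermitian then
    (hA.eigenvectorUnitary : Matrix (Fin n) (Fin n) ℝ) *
      Matrix.diagonal (fun i => Real.log (hA.eigenvalues i)) *
      star (hA.eigenvectorUnitary : Matrix (Fin n) (Fin n) ℝ)
  else 0

noncomputable def frob {n : ℕ} (A : Matrix (Fin n) (Fin n) ℝ) : ℝ :=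
  Real.sqrt (∑ i, ∑ j, (A i j) ^ 2)

noncomputable def invSqrt {n : ℕ} (A : Matrix (Fin n) (Fin n) ℝ) : Matrix (Fin n) (Fin n) ℝ :=
  open scoped Classical in
  if hA : A.PosDef then
    ((hA.1.eigenvectorUnitary : Matrix (Fin n) (Fin n) ℝ) *
      Matrix.diagonal (((↑) : ℝ → ℝ) ∘ (Real.sqrt ·) ∘ hA.1.eigenvalues) *
      (star hA.1.eigenvectorUnitary : Matrix (Fin n) (Fin n) ℝ))⁻¹
  else 0

/-- AIRM distance δ_r(X,Y) = ‖log (X^{-1/2} Y X^{-1/2})‖_F -/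
noncomputable def airm {n : ℕ} (X Y : Matrix (Fin n) (Fin n) ℝ) : ℝ :=
  frob (matLog (invSqrt X * Y * invSqrt X))

/-- Stein / JBLD divergence. -/
noncomputable def jbld {n : ℕ} (X Y : Matrix (Fin n) (Fin n) ℝ) : ℝ :=
  Real.log ((((1:ℝ)/2) • (X + Y)).det) - (1/2) * Real.log ((X * Y).det)


-- scalar AM-GM
lemma sqrt_le_half (a : ℝ) (ha : 0 < a) : Real.sqrt a ≤ (1 + a) / 2 := by
  nlinarith [Real.sq_sqrt ha.le, Real.sqrt_nonneg a, sq_nonneg (Real.sqrt a - 1)]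

lemma sqrt_eq_half_iff (a : ℝ) (ha : 0 < a) : (1 + a) / 2 = Real.sqrt a ↔ a = 1 := by
  constructor
  · intro h
    have h1 := Real.sq_sqrt ha.le
    nlinarith [sq_nonneg (Real.sqrt a - 1)]
  · rintro rfl; simp

lemma sqrt_prod {n : ℕ} (f : Fin n → ℝ) (hf : ∀ i, 0 ≤ f i) :
    Real.sqrt (∏ i, f i) = ∏ i, Real.sqrt (f i) := by
  induction (Finset.univ : Finset (Fin n)) using Finset.cons_induction with
  | empty => simp
  | cons i s hi ih =>
    rw [Finset.prod_cons, Finset.prod_cons, Real.sqrt_mul (hf i), ih]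

lemma posDef_conj {n : ℕ} {A B : Matrix (Fin n) (Fin n) ℝ} (hA : A.PosDef)
    (hB : IsUnit B.det) : (Bᴴ * A * B).PosDef := by
  refine PosDef.of_dotProduct_mulVec_pos (isHermitian_conjTranspose_mul_mul B hA.1) fun x hx => ?_
  have hBx : B *ᵥ x ≠ 0 := by
    intro h
    apply hx
    have := congrArg (fun v => B⁻¹ *ᵥ v) h
    simpa [mulVec_mulVec, nonsing_inv_mul _ hB] using this
  simpa only [star_mulVec, dotProduct_mulVec, vecMul_vecMul] using hA.dotProduct_mulVec_pos hBx



lemma key {n : ℕ} {M : Matrix (Fin n) (Fin n) ℝ} (hM : M.PosDef) :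
    Real.sqrt M.det ≤ (((1:ℝ)/2) • ((1:Matrix (Fin n) (Fin n) ℝ) + M)).det ∧
      ((((1:ℝ)/2) • ((1:Matrix (Fin n) (Fin n) ℝ) + M)).det = Real.sqrt M.det ↔ M = 1) := by
  have h := hM.1
  set U : Matrix (Fin n) (Fin n) ℝ := (h.eigenvectorUnitary : Matrix (Fin n) (Fin n) ℝ) with hU
  have hUU : U * star U = 1 := (Matrix.mem_unitaryGroup_iff).mp h.eigenvectorUnitary.2
  have hUU' : star U * U = 1 := (Matrix.mem_unitaryGroup_iff').mp h.eigenvectorUnitary.2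
  have hμpos : ∀ i, 0 < h.eigenvalues i := hM.eigenvalues_pos
  have hspec : M = U * diagonal h.eigenvalues * star U := by
    have := h.spectral_theorem
    simpa [hU] using this
  have hone : (1 : Matrix (Fin n) (Fin n) ℝ) = U * diagonal (fun _ => (1:ℝ)) * star U := by
    simp [diagonal_one, hUU]
  have hN : ((1:ℝ)/2) • ((1:Matrix (Fin n) (Fin n) ℝ) + M)
      = U * diagonal (fun i => (1 + h.eigenvalues i)/2) * star U := by
    calc ((1:ℝ)/2) • ((1:Matrix (Fin n) (Fin n) ℝ) + M)
        = ((1:ℝ)/2) • (U * (diagonal (fun _ => (1:ℝ)) + diagonal h.eigenvalues) * star U) := by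
          rw [Matrix.mul_add, Matrix.add_mul, ← hone, ← hspec]
      _ = U * (((1:ℝ)/2) • (diagonal (fun _ => (1:ℝ)) + diagonal h.eigenvalues)) * star U := by
          rw [Matrix.mul_smul, Matrix.smul_mul]
      _ = U * diagonal (fun i => (1 + h.eigenvalues i)/2) * star U := by
          have hdd : ((1:ℝ)/2) • (diagonal (fun _ => (1:ℝ)) + diagonal h.eigenvalues)
              = diagonal (fun i => (1 + h.eigenvalues i)/2) := by
            rw [diagonal_add, ← diagonal_smul]
            have hfun : ((1:ℝ)/2) • (fun i => 1 + h.eigenvalues i)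
                = fun i => (1 + h.eigenvalues i)/2 := by
              funext i
              simp only [Pi.smul_apply, smul_eq_mul]
              ring
            rw [hfun]
          rw [hdd]
  have hdetU : U.det * (star U).det = 1 := by
    rw [← det_mul, hUU, det_one]
  have hdetN : (((1:ℝ)/2) • ((1:Matrix (Fin n) (Fin n) ℝ) + M)).det
      = ∏ i, (1 + h.eigenvalues i)/2 := by
    rw [hN, det_mul, det_mul, mul_comm, ← mul_assoc, mul_comm (star U).det, hdetU, one_mul,
      det_diagonal]
  have hdetM : M.det = ∏ i, h.eigenvalues i := by
    simpa using h.det_eq_prod_eigenvalues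
  have hsq : Real.sqrt M.det = ∏ i, Real.sqrt (h.eigenvalues i) := by
    rw [hdetM, sqrt_prod _ (fun i => (hμpos i).le)]
  constructor
  · rw [hsq, hdetN]
    exact Finset.prod_le_prod (fun i _ => Real.sqrt_nonneg _)
      (fun i _ => sqrt_le_half _ (hμpos i))
  · constructor
    · intro heq
      rw [hsq, hdetN] at heq
      have hall : ∀ i, h.eigenvalues i = 1 := by
        by_contra hc
        push_neg at hc
        obtain ⟨j, hj⟩ := hc
        have : ∏ i, Real.sqrt (h.eigenvalues i) < ∏ i, (1 + h.eigenvalues i)/2 := by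
          refine Finset.prod_lt_prod (fun i _ => Real.sqrt_pos.mpr (hμpos i))
            (fun i _ => sqrt_le_half _ (hμpos i)) ⟨j, Finset.mem_univ j, ?_⟩
          exact lt_of_le_of_ne (sqrt_le_half _ (hμpos j))
            (fun hcontra => hj ((sqrt_eq_half_iff _ (hμpos j)).mp hcontra.symm))
        linarith
      rw [hspec]
      have : diagonal h.eigenvalues = 1 := by
        rw [show h.eigenvalues = fun _ => (1:ℝ) from funext hall, diagonal_one]
      rw [this, Matrix.mul_one, hUU]
    · rintro rfl
      have h2 : ((1:ℝ)/2) • ((1:Matrix (Fin n) (Fin n) ℝ) + 1) = 1 := by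
        ext i j
        simp [Matrix.one_apply]
        split_ifs <;> norm_num
      rw [h2]
      simp

theorem det_midpoint_ge_geom_mean {D : ℕ} (X Y : Matrix (Fin D) (Fin D) ℝ)
    (hX : X.PosDef) (hY : Y.PosDef) :
    Real.sqrt (X.det * Y.det) ≤ (((1:ℝ)/2) • (X + Y)).det ∧
      ((((1:ℝ)/2) • (X + Y)).det = Real.sqrt (X.det * Y.det) ↔ X = Y) := by
  open scoped MatrixOrder in
  set S := CFC.sqrt X with hSdef
  open scoped MatrixOrder in
  have hSps : S.PosSemidef := (CFC.sqrt_nonneg X).posSemidef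
  open scoped MatrixOrder in
  have hSS : S * S = X := CFC.sqrt_mul_sqrt_self X hX.posSemidef.nonneg
  have hdX : 0 < X.det := hX.det_pos
  have hXd2 : S.det * S.det = X.det := by rw [← det_mul, hSS]
  have hdS : S.det ≠ 0 := by
    intro h
    rw [← hXd2, h, mul_zero] at hdX
    exact lt_irrefl 0 hdX
  have hSu : IsUnit S.det := isUnit_iff_ne_zero.mpr hdS
  have hSH : Sᴴ = S := hSps.1
  have hSinvH : (S⁻¹)ᴴ = S⁻¹ := by rw [conjTranspose_nonsing_inv, hSH]
  have hSiu : IsUnit (S⁻¹).det := S.isUnit_nonsing_inv_det hSu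
  set M := S⁻¹ * Y * S⁻¹ with hMdef
  have hM : M.PosDef := by
    have := posDef_conj hY hSiu
    rwa [hSinvH] at this
  have h1 : S * S⁻¹ = 1 := mul_nonsing_inv S hSu
  have h2 : S⁻¹ * S = 1 := nonsing_inv_mul S hSu
  have hSMS : S * M * S = Y := by
    rw [hMdef]
    simp only [Matrix.mul_assoc]
    rw [h2, Matrix.mul_one, ← Matrix.mul_assoc, h1, Matrix.one_mul]
  have hkey := key hM
  have hNdet : (((1:ℝ)/2) • (X + Y)).det
      = X.det * (((1:ℝ)/2) • ((1:Matrix (Fin D) (Fin D) ℝ) + M)).det := by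
    have hconj : ((1:ℝ)/2) • (X + Y)
        = S * (((1:ℝ)/2) • ((1:Matrix (Fin D) (Fin D) ℝ) + M)) * S := by
      rw [Matrix.mul_smul, Matrix.smul_mul]
      congr 1
      rw [Matrix.mul_add, Matrix.add_mul, Matrix.mul_one, hSS, hSMS]
    rw [hconj, det_mul, det_mul, ← hXd2]
    ring
  have hYdet : Y.det = X.det * M.det := by
    rw [← hSMS, det_mul, det_mul, ← hXd2]
    ring
  have hsqrt : Real.sqrt (X.det * Y.det) = X.det * Real.sqrt M.det := by
    rw [hYdet, ← mul_assoc, show X.det * X.det = X.det ^ 2 by ring,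
      Real.sqrt_mul (sq_nonneg _), Real.sqrt_sq hdX.le]
  constructor
  · rw [hNdet, hsqrt]
    exact mul_le_mul_of_nonneg_left hkey.1 hdX.le
  · rw [hNdet, hsqrt]
    constructor
    · intro h
      have heq := mul_left_cancel₀ (ne_of_gt hdX) h
      have hM1 : M = 1 := hkey.2.mp heq
      have : Y = X := by rw [← hSS, ← hSMS, hM1, Matrix.mul_one]
      exact this.symm
    · rintro rfl
      have hM1 : M = 1 := by
        rw [hMdef, ← hSS, ← Matrix.mul_assoc S⁻¹ S S, h2, Matrix.one_mul, h1]
      rw [hkey.2.mpr hM1]
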